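/- Let F = (f_ω)_{ω ∈ ∂B} be a border basis for B connected to 1 with commuting multiplication operators, and Ξ the module of commutation syzygies. If m·θ = m'·θ' with θ, θ' ∈ ∂B and m, m' monomials, then m e_θ ≡ m' e_{θ'} + Σ_{ω ∈ ∂B} p_ω e_ω (mod Ξ) for some polynomials p_ω of total degree < max(|m|, |m'|). -/

import Mathlib

open MvPolynomial
open scoped Classical

abbrev Mon (n : ℕ) := Fin n →₀ ℕ

def prolong {n : ℕ} (B : Set (Mon n)) : Set (Mon n) :=
  B ∪ ⋃ i : Fin n, (fun m => Finsupp.single i 1 + m) '' B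

def border {n : ℕ} (B : Set (Mon n)) : Set (Mon n) := prolong B \ B

noncomputable def varsSum {n : ℕ} (L : List (Fin n)) : Mon n :=
  (L.map fun i => Finsupp.single i 1).sum

def ConnectedTo1 {n : ℕ} (B : Set (Mon n)) : Prop :=
  0 ∈ B ∧ ∀ m ∈ B, ∃ L : List (Fin n), varsSum L = m ∧
    ∀ L' : List (Fin n), L' <+: L → varsSum L' ∈ B

def degSum {n : ℕ} (m : Mon n) : ℕ := m.sum fun _ e => e
noncomputable def spanMon {n : ℕ} (K : Type) [Field K] (B : Set (Mon n)) :
    Submodule K (MvPolynomial (Fin n) K) :=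
  Submodule.span K ((fun m => (monomial m (1 : K) : MvPolynomial (Fin n) K)) '' B)

noncomputable def piF {n : ℕ} {K : Type} [Field K] (B H : Set (Mon n))
    (ρ : Mon n → MvPolynomial (Fin n) K) (p : MvPolynomial (Fin n) K) :
    MvPolynomial (Fin n) K :=
  p.support.sum fun m =>
    if m ∈ B then monomial m (p.coeff m)
    else if m ∈ H then p.coeff m • ρ m else 0

noncomputable def redList {n : ℕ} {K : Type} [Field K] (B H : Set (Mon n))
    (ρ : Mon n → MvPolynomial (Fin n) K) : List (Fin n) → MvPolynomial (Fin n) K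
  | [] => 1
  | i :: L => piF B H ρ (X i * redList B H ρ L)

def DefinedOn {n : ℕ} {K : Type} [Field K] (B H : Set (Mon n))
    (p : MvPolynomial (Fin n) K) : Prop :=
  ↑p.support ⊆ B ∪ H

def RedDefined {n : ℕ} {K : Type} [Field K] (B H : Set (Mon n))
    (ρ : Mon n → MvPolynomial (Fin n) K) : List (Fin n) → Prop
  | [] => True
  | i :: L => RedDefined B H ρ L ∧ DefinedOn B H (X i * redList B H ρ L)

def Eset {n : ℕ} {K : Type} [Field K] (B H : Set (Mon n))
    (ρ : Mon n → MvPolynomial (Fin n) K) : Set (Mon n) :=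
  { m | ∀ L : List (Fin n), varsSum L = m → RedDefined B H ρ L }

/-- μ^i(q) ∈ K[x]^(∂B): the vector of coefficients μ^i_{q,ω} = coeff_ω(x_i·q)
    (for q ∈ ⟨B⟩) expressing x_i·q − π_F(x_i·q) = Σ_ω μ^i_{q,ω} f_ω. -/
noncomputable def muF {n : ℕ} {K : Type} [Field K] (B : Set (Mon n)) (i : Fin n)
    (q : MvPolynomial (Fin n) K) : Mon n →₀ MvPolynomial (Fin n) K :=
  ∑ ω ∈ (X i * q).support,
    if ω ∈ border B then
      Finsupp.single ω (C ((X i * q).coeff ω) : MvPolynomial (Fin n) K)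
    else 0

/-- The generators of the module Ξ of commutation syzygies:
    x_{i₁} μ^{i₂}(m) + μ^{i₁}(x_{i₂}m) − x_{i₂} μ^{i₁}(m) − μ^{i₂}(x_{i₁}m), m ∈ B. -/
noncomputable def XiGen {n : ℕ} {K : Type} [Field K] (B : Set (Mon n))
    (ρ : Mon n → MvPolynomial (Fin n) K) :
    Set (Mon n →₀ MvPolynomial (Fin n) K) :=
  { v | ∃ m ∈ B, ∃ i1 i2 : Fin n,
    v = (X i1 : MvPolynomial (Fin n) K) • muF B i2 (monomial m (1 : K))
      + muF B i1 (piF B (border B) ρ (X i2 * monomial m (1 : K)))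
      - (X i2 : MvPolynomial (Fin n) K) • muF B i1 (monomial m (1 : K))
      - muF B i2 (piF B (border B) ρ (X i1 * monomial m (1 : K))) }

section Dev
variable {n : ℕ} {K : Type} [Field K]

-- basic varsSum lemmas
@[simp] lemma varsSum_nil : varsSum ([] : List (Fin n)) = 0 := rfl

@[simp] lemma varsSum_cons (i : Fin n) (L : List (Fin n)) :
    varsSum (i :: L) = Finsupp.single i 1 + varsSum L := by
  simp [varsSum]

lemma varsSum_append (L M : List (Fin n)) :
    varsSum (L ++ M) = varsSum L + varsSum M := by
  simp [varsSum]

lemma varsSum_reverse (L : List (Fin n)) : varsSum L.reverse = varsSum L := by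
  unfold varsSum
  rw [List.map_reverse, List.sum_reverse]

lemma varsSum_apply (L : List (Fin n)) (a : Fin n) :
    varsSum L a = L.count a := by
  induction L with
  | nil => simp
  | cons i L ih =>
      rw [varsSum_cons, Finsupp.add_apply, ih, Finsupp.single_apply, List.count_cons]
      by_cases h : i = a <;> simp [h, beq_iff_eq] <;> omega

lemma perm_of_varsSum_eq {L L' : List (Fin n)} (h : varsSum L = varsSum L') :
    List.Perm L L' := by
  rw [List.perm_iff_count]
  intro a
  rw [← varsSum_apply, ← varsSum_apply, h]

lemma varsSum_replicate (k : ℕ) (a : Fin n) :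
    varsSum (List.replicate k a) = Finsupp.single a k := by
  induction k with
  | zero => simp
  | succ k ih =>
      rw [List.replicate_succ, varsSum_cons, ih, ← Finsupp.single_add, add_comm]

lemma degSum_add (a b : Mon n) : degSum (a + b) = degSum a + degSum b := by
  unfold degSum
  exact Finsupp.sum_add_index' (fun _ => rfl) (fun _ _ _ => rfl)

lemma exists_list_varsSum (m : Mon n) :
    ∃ L : List (Fin n), varsSum L = m ∧ L.length = degSum m := by
  induction m using Finsupp.induction with
  | zero => exact ⟨[], rfl, by simp [degSum]⟩
  | single_add a k f _ hk ih =>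
      obtain ⟨L, hL, hlen⟩ := ih
      refine ⟨List.replicate k a ++ L, ?_, ?_⟩
      · rw [varsSum_append, varsSum_replicate, hL]
      · rw [List.length_append, List.length_replicate, hlen, degSum_add]
        congr 1
        simp [degSum, Finsupp.sum_single_index]

variable (B H : Set (Mon n)) (ρ : Mon n → MvPolynomial (Fin n) K)

lemma piF_eq_sum (p : MvPolynomial (Fin n) K) :
    piF B H ρ p = (AddMonoidAlgebra.coeff p).sum fun m c =>
      if m ∈ B then monomial m c else if m ∈ H then c • ρ m else 0 := rfl

@[simp] lemma piF_zero : piF B H ρ (0 : MvPolynomial (Fin n) K) = 0 := by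
  simp [piF]

lemma piF_add (p q : MvPolynomial (Fin n) K) :
    piF B H ρ (p + q) = piF B H ρ p + piF B H ρ q := by
  rw [piF_eq_sum, piF_eq_sum, piF_eq_sum]
  refine Finsupp.sum_add_index' ?_ ?_
  · intro m; split_ifs <;> simp
  · intro m b₁ b₂; split_ifs <;> simp [map_add, add_smul]

@[simp] lemma muF_zero (i : Fin n) : muF B i (0 : MvPolynomial (Fin n) K) = 0 := by
  simp [muF]

lemma muF_eq_sum (i : Fin n) (q : MvPolynomial (Fin n) K) :
    muF B i q = (AddMonoidAlgebra.coeff (X i * q)).sum fun ω c =>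
      if ω ∈ border B then Finsupp.single ω (C c : MvPolynomial (Fin n) K) else 0 := rfl

lemma muF_add (i : Fin n) (p q : MvPolynomial (Fin n) K) :
    muF B i (p + q) = muF B i p + muF B i q := by
  rw [muF_eq_sum, muF_eq_sum, muF_eq_sum, mul_add]
  refine Finsupp.sum_add_index' ?_ ?_
  · intro m; split_ifs <;> simp
  · intro m b₁ b₂; split_ifs <;> simp [Finsupp.single_add]

lemma support_C_mul (c : K) (hc : c ≠ 0) (p : MvPolynomial (Fin n) K) :
    (C c * p).support = p.support := by
  ext m
  simp [mem_support_iff, coeff_C_mul, hc]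

lemma piF_C_mul (c : K) (p : MvPolynomial (Fin n) K) :
    piF B H ρ (C c * p) = C c * piF B H ρ p := by
  by_cases hc : c = 0
  · simp [hc]
  · unfold piF
    rw [support_C_mul c hc, Finset.mul_sum]
    refine Finset.sum_congr rfl fun m _ => ?_
    rw [coeff_C_mul]
    split_ifs with h1 h2
    · rw [C_mul_monomial]
    · rw [mul_smul, smul_eq_C_mul]
    · rw [mul_zero]

lemma muF_C_mul (i : Fin n) (c : K) (p : MvPolynomial (Fin n) K) :
    muF B i (C c * p) = (C c : MvPolynomial (Fin n) K) • muF B i p := by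
  by_cases hc : c = 0
  · simp [hc]
  · unfold muF
    have h : X i * (C c * p) = C c * (X i * p) := by ring
    rw [h, support_C_mul c hc, Finset.smul_sum]
    refine Finset.sum_congr rfl fun ω _ => ?_
    rw [coeff_C_mul]
    split_ifs with h1
    · rw [Finsupp.smul_single, smul_eq_mul, ← C_mul]
    · rw [smul_zero]

lemma muF_apply (i : Fin n) (q : MvPolynomial (Fin n) K) (ω : Mon n) :
    muF B i q ω = if ω ∈ border B then (C ((X i * q).coeff ω) : MvPolynomial (Fin n) K) else 0 := by
  unfold muF
  rw [Finset.sum_apply']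
  rw [Finset.sum_eq_single ω]
  · split_ifs with h
    · rw [Finsupp.single_eq_same]
    · rfl
  · intro b _ hb
    split_ifs with h
    · rw [Finsupp.single_eq_of_ne' hb]
    · rfl
  · intro hω
    rw [notMem_support_iff] at hω
    split_ifs with h
    · rw [hω, map_zero, Finsupp.single_zero, Finsupp.coe_zero, Pi.zero_apply]
    · rfl

lemma muF_support (i : Fin n) (q : MvPolynomial (Fin n) K) (ω : Mon n)
    (h : muF B i q ω ≠ 0) : ω ∈ border B := by
  by_contra hb
  rw [muF_apply, if_neg hb] at h
  exact h rfl

lemma piF_support (hρ : ∀ ω ∈ border B, ↑(ρ ω).support ⊆ B)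
    (p : MvPolynomial (Fin n) K) :
    ↑(piF B (border B) ρ p).support ⊆ B := by
  intro m hm
  simp only [Finset.mem_coe, mem_support_iff] at hm
  by_contra hmB
  apply hm
  unfold piF
  rw [coeff_sum]
  refine Finset.sum_eq_zero fun t _ => ?_
  split_ifs with h1 h2
  · rw [coeff_monomial]
    split_ifs with h3
    · exact absurd (h3 ▸ h1) hmB
    · rfl
  · rw [smul_eq_C_mul, coeff_C_mul]
    have : (ρ t).coeff m = 0 := by
      rw [← notMem_support_iff]
      intro hmem
      exact hmB (hρ t h2 hmem)
    rw [this, mul_zero]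
  · rw [coeff_zero]

lemma mem_spanMon_of_supp {p : MvPolynomial (Fin n) K} (h : ↑p.support ⊆ B) :
    p ∈ spanMon K B := by
  rw [show p = ∑ v ∈ p.support, monomial v (coeff v p) from as_sum p]
  refine Submodule.sum_mem _ fun v hv => ?_
  have : monomial v (coeff v p) = (coeff v p) • monomial v (1 : K) := by
    rw [smul_monomial, smul_eq_mul, mul_one]
  rw [this]
  exact Submodule.smul_mem _ _ (Submodule.subset_span ⟨v, h hv, rfl⟩)

lemma piF_monomial_mem_B {t : Mon n} (ht : t ∈ B) :
    piF B H ρ (monomial t (1 : K)) = monomial t 1 := by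
  unfold piF
  rw [support_monomial, if_neg one_ne_zero, Finset.sum_singleton, if_pos ht,
    coeff_monomial, if_pos rfl]

lemma piF_monomial_border {t : Mon n} (htB : t ∉ B) (ht : t ∈ H) :
    piF B H ρ (monomial t (1 : K)) = ρ t := by
  unfold piF
  rw [support_monomial, if_neg one_ne_zero, Finset.sum_singleton, if_neg htB, if_pos ht,
    coeff_monomial, if_pos rfl, one_smul]

lemma muF_monomial_mem_B {b : Mon n} (i : Fin n) (hb : Finsupp.single i 1 + b ∈ B) :
    muF B i (monomial b (1 : K)) = 0 := by
  unfold muF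
  have h : X i * monomial b (1:K) = monomial (Finsupp.single i 1 + b) 1 := by
    rw [monomial_single_add, pow_one]
  rw [h, support_monomial, if_neg one_ne_zero, Finset.sum_singleton,
    if_neg (fun hB => hB.2 hb)]

lemma muF_monomial_border {b : Mon n} (i : Fin n) (hb : Finsupp.single i 1 + b ∈ border B) :
    muF B i (monomial b (1 : K)) = Finsupp.single (Finsupp.single i 1 + b) 1 := by
  unfold muF
  have h : X i * monomial b (1:K) = monomial (Finsupp.single i 1 + b) 1 := by
    rw [monomial_single_add, pow_one]
  rw [h, support_monomial, if_neg one_ne_zero, Finset.sum_singleton, if_pos hb,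
    coeff_monomial, if_pos rfl, map_one]

noncomputable def Gd (B : Set (Mon n)) (ρ : Mon n → MvPolynomial (Fin n) K)
    (i j : Fin n) (r : MvPolynomial (Fin n) K) : Mon n →₀ MvPolynomial (Fin n) K :=
  (X i : MvPolynomial (Fin n) K) • muF B j r
    + muF B i (piF B (border B) ρ (X j * r))
    - (X j : MvPolynomial (Fin n) K) • muF B i r
    - muF B j (piF B (border B) ρ (X i * r))

lemma Gd_add (i j : Fin n) (r s : MvPolynomial (Fin n) K) :
    Gd B ρ i j (r + s) = Gd B ρ i j r + Gd B ρ i j s := by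
  unfold Gd
  rw [muF_add, muF_add, mul_add, mul_add, piF_add, piF_add, muF_add, muF_add,
    smul_add, smul_add]
  abel

lemma Gd_C_mul (i j : Fin n) (c : K) (r : MvPolynomial (Fin n) K) :
    Gd B ρ i j (C c * r) = (C c : MvPolynomial (Fin n) K) • Gd B ρ i j r := by
  unfold Gd
  have h1 : X j * (C c * r) = C c * (X j * r) := by ring
  have h2 : X i * (C c * r) = C c * (X i * r) := by ring
  rw [muF_C_mul, muF_C_mul, h1, h2, piF_C_mul, piF_C_mul, muF_C_mul, muF_C_mul]
  rw [smul_sub, smul_sub, smul_add]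
  congr 2
  · congr 1
    rw [smul_smul, smul_smul, mul_comm]
  · rw [smul_smul, smul_smul, mul_comm]

lemma Gd_mem (hρ : ∀ ω ∈ border B, ↑(ρ ω).support ⊆ B) (i j : Fin n)
    (r : MvPolynomial (Fin n) K) (hr : ↑r.support ⊆ B) :
    Gd B ρ i j r ∈ Submodule.span (MvPolynomial (Fin n) K) (XiGen B ρ) := by
  have key : ∀ s : Finset (Mon n), ↑s ⊆ B → ∀ f : Mon n → K,
      Gd B ρ i j (∑ m ∈ s, monomial m (f m)) ∈
        Submodule.span (MvPolynomial (Fin n) K) (XiGen B ρ) := by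
    intro s
    induction s using Finset.induction with
    | empty =>
        intro _ f
        simp only [Finset.sum_empty]
        have : Gd B ρ i j (0 : MvPolynomial (Fin n) K) = 0 := by
          unfold Gd; simp
        rw [this]
        exact Submodule.zero_mem _
    | insert a s' ha ih =>
        intro hs f
        rw [Finset.sum_insert ha, Gd_add]
        refine Submodule.add_mem _ ?_ (ih (by
          intro x hx; exact hs (by simp [hx])) f)
        have hmono : (monomial a (f a) : MvPolynomial (Fin n) K)
            = C (f a) * monomial a 1 := by rw [C_mul_monomial, mul_one]
        rw [hmono, Gd_C_mul]
        refine Submodule.smul_mem _ _ (Submodule.subset_span ?_)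
        exact ⟨a, hs (by simp), i, j, rfl⟩
  have := key r.support hr (fun m => coeff m r)
  rwa [← as_sum r] at this

noncomputable def redQ (B : Set (Mon n)) (ρ : Mon n → MvPolynomial (Fin n) K)
    (q : MvPolynomial (Fin n) K) : List (Fin n) → MvPolynomial (Fin n) K
  | [] => q
  | i :: L => piF B (border B) ρ (X i * redQ B ρ q L)

noncomputable def SyzQ (B : Set (Mon n)) (ρ : Mon n → MvPolynomial (Fin n) K)
    (q : MvPolynomial (Fin n) K) : List (Fin n) → (Mon n →₀ MvPolynomial (Fin n) K)
  | [] => 0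
  | i :: L => muF B i (redQ B ρ q L) + (X i : MvPolynomial (Fin n) K) • SyzQ B ρ q L

@[simp] lemma redQ_nil (q : MvPolynomial (Fin n) K) : redQ B ρ q [] = q := rfl
@[simp] lemma redQ_cons (q : MvPolynomial (Fin n) K) (i : Fin n) (L : List (Fin n)) :
    redQ B ρ q (i :: L) = piF B (border B) ρ (X i * redQ B ρ q L) := rfl
@[simp] lemma SyzQ_nil (q : MvPolynomial (Fin n) K) : SyzQ B ρ q [] = 0 := rfl
@[simp] lemma SyzQ_cons (q : MvPolynomial (Fin n) K) (i : Fin n) (L : List (Fin n)) :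
    SyzQ B ρ q (i :: L) = muF B i (redQ B ρ q L)
      + (X i : MvPolynomial (Fin n) K) • SyzQ B ρ q L := rfl

lemma redQ_supp (hρ : ∀ ω ∈ border B, ↑(ρ ω).support ⊆ B)
    (q : MvPolynomial (Fin n) K) (hq : ↑q.support ⊆ B) :
    ∀ L : List (Fin n), ↑(redQ B ρ q L).support ⊆ B
  | [] => hq
  | i :: L => piF_support B ρ hρ _

lemma redQ_append (q : MvPolynomial (Fin n) K) (M N : List (Fin n)) :
    redQ B ρ q (M ++ N) = redQ B ρ (redQ B ρ q N) M := by
  induction M with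
  | nil => rfl
  | cons i M ih => rw [List.cons_append, redQ_cons, redQ_cons, ih]

lemma SyzQ_append (q : MvPolynomial (Fin n) K) (M N : List (Fin n)) :
    SyzQ B ρ q (M ++ N) = SyzQ B ρ (redQ B ρ q N) M
      + (monomial (varsSum M) (1 : K) : MvPolynomial (Fin n) K) • SyzQ B ρ q N := by
  induction M with
  | nil =>
      simp only [List.nil_append, SyzQ_nil, varsSum_nil]
      rw [show (monomial (0 : Mon n) (1:K) : MvPolynomial (Fin n) K) = 1 by
        rw [monomial_zero', C_1], one_smul, zero_add]
  | cons i M ih =>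
      rw [List.cons_append, SyzQ_cons, SyzQ_cons, ih, ← redQ_append, smul_add, add_assoc]
      congr 1
      rw [smul_smul, varsSum_cons]
      congr 1
      rw [monomial_single_add, pow_one]

lemma SyzQ_bound (q : MvPolynomial (Fin n) K) :
    ∀ (L : List (Fin n)) (ω : Mon n), SyzQ B ρ q L ω ≠ 0 →
      ω ∈ border B ∧ (SyzQ B ρ q L ω).totalDegree + 1 ≤ L.length := by
  intro L
  induction L with
  | nil => intro ω h; exact absurd rfl h
  | cons i L ih =>
      intro ω h
      have happ : SyzQ B ρ q (i :: L) ω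
          = muF B i (redQ B ρ q L) ω + X i * SyzQ B ρ q L ω := by
        simp only [SyzQ, Finsupp.add_apply, Finsupp.smul_apply, smul_eq_mul]
      by_cases hs : SyzQ B ρ q L ω = 0
      · rw [happ, hs, mul_zero, add_zero] at h ⊢
        refine ⟨muF_support B i _ ω h, ?_⟩
        rw [muF_apply] at h ⊢
        split_ifs at h ⊢ with hb
        · rw [totalDegree_C]; simp
        · exact absurd rfl h
      · obtain ⟨hωb, hdeg⟩ := ih ω hs
        refine ⟨hωb, ?_⟩
        rw [happ]
        calc (muF B i (redQ B ρ q L) ω + X i * SyzQ B ρ q L ω).totalDegree + 1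
            ≤ max (muF B i (redQ B ρ q L) ω).totalDegree
                (X i * SyzQ B ρ q L ω).totalDegree + 1 := by
              exact Nat.add_le_add_right (totalDegree_add _ _) 1
          _ ≤ L.length + 1 := by
              refine Nat.add_le_add_right (max_le ?_ ?_) 1
              · rw [muF_apply]
                split_ifs <;> simp
              · calc (X i * SyzQ B ρ q L ω).totalDegree
                    ≤ (X i : MvPolynomial (Fin n) K).totalDegree
                      + (SyzQ B ρ q L ω).totalDegree := totalDegree_mul _ _
                  _ ≤ 1 + (SyzQ B ρ q L ω).totalDegree := by rw [totalDegree_X]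
                  _ ≤ L.length := by omega
          _ = (i :: L).length := by simp

lemma perm_invariance (hρ : ∀ ω ∈ border B, ↑(ρ ω).support ⊆ B)
    (hcomm : ∀ b ∈ spanMon K B, ∀ i j : Fin n,
      piF B (border B) ρ (X i * piF B (border B) ρ (X j * b)) =
      piF B (border B) ρ (X j * piF B (border B) ρ (X i * b)))
    (q : MvPolynomial (Fin n) K) (hq : ↑q.support ⊆ B) :
    ∀ {L L' : List (Fin n)}, List.Perm L L' →
      redQ B ρ q L = redQ B ρ q L' ∧
      SyzQ B ρ q L - SyzQ B ρ q L' ∈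
        Submodule.span (MvPolynomial (Fin n) K) (XiGen B ρ) := by
  intro L L' h
  induction h with
  | nil => exact ⟨rfl, by simpa using Submodule.zero_mem _⟩
  | cons x h ih =>
      rename_i l₁ l₂
      obtain ⟨hred, hsyz⟩ := ih
      constructor
      · rw [redQ_cons, redQ_cons, hred]
      · rw [SyzQ_cons, SyzQ_cons, hred]
        have heq : muF B x (redQ B ρ q l₂) + (X x : MvPolynomial (Fin n) K) • SyzQ B ρ q l₁
            - (muF B x (redQ B ρ q l₂) + (X x : MvPolynomial (Fin n) K) • SyzQ B ρ q l₂)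
            = (X x : MvPolynomial (Fin n) K) • (SyzQ B ρ q l₁ - SyzQ B ρ q l₂) := by
          rw [smul_sub]; abel
        rw [heq]
        exact Submodule.smul_mem _ _ hsyz
  | swap x y l =>
      set r := redQ B ρ q l with hr
      have hrs : ↑r.support ⊆ B := redQ_supp B ρ hρ q hq l
      constructor
      · rw [redQ_cons, redQ_cons, redQ_cons, redQ_cons]
        exact hcomm r (mem_spanMon_of_supp B hrs) y x
      · have : SyzQ B ρ q (y :: x :: l) - SyzQ B ρ q (x :: y :: l)
            = Gd B ρ y x r := by
          rw [SyzQ_cons, SyzQ_cons, SyzQ_cons, SyzQ_cons, redQ_cons, redQ_cons]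
          unfold Gd
          rw [smul_add, smul_add, smul_smul, smul_smul, mul_comm (X y) (X x)]
          abel
        rw [this]
        exact Gd_mem B ρ hρ y x r hrs
  | trans h1 h2 ih1 ih2 =>
      rename_i l₁ l₂ l₃
      obtain ⟨hred1, hsyz1⟩ := ih1
      obtain ⟨hred2, hsyz2⟩ := ih2
      refine ⟨hred1.trans hred2, ?_⟩
      have heq : SyzQ B ρ q l₁ - SyzQ B ρ q l₃
          = (SyzQ B ρ q l₁ - SyzQ B ρ q l₂) + (SyzQ B ρ q l₂ - SyzQ B ρ q l₃) := by abel
      rw [heq]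
      exact Submodule.add_mem _ hsyz1 hsyz2

lemma red_of_suffixes (h0 : (0 : Mon n) ∈ B) :
    ∀ L : List (Fin n), (∀ L' : List (Fin n), L' <:+ L → varsSum L' ∈ B) →
      redQ B ρ (1 : MvPolynomial (Fin n) K) L = monomial (varsSum L) 1 ∧
      SyzQ B ρ (1 : MvPolynomial (Fin n) K) L = 0 := by
  intro L
  induction L with
  | nil =>
      intro _
      refine ⟨?_, rfl⟩
      rw [redQ_nil, varsSum_nil, monomial_zero', C_1]
  | cons i L ih =>
      intro hsuf
      have htail : ∀ L' : List (Fin n), L' <:+ L → varsSum L' ∈ B := by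
        intro L' hL'
        exact hsuf L' (hL'.trans (List.suffix_cons i L))
      obtain ⟨hred, hsyz⟩ := ih htail
      have hmem : varsSum (i :: L) ∈ B := hsuf _ (List.suffix_refl _)
      rw [varsSum_cons] at hmem
      constructor
      · rw [redQ_cons, hred, varsSum_cons]
        have : X i * (monomial (varsSum L) (1:K) : MvPolynomial (Fin n) K)
            = monomial (Finsupp.single i 1 + varsSum L) 1 := by
          rw [monomial_single_add, pow_one]
        rw [this, piF_monomial_mem_B B (border B) ρ hmem]
      · rw [SyzQ_cons, hred, hsyz, smul_zero, add_zero]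
        exact muF_monomial_mem_B B i hmem

lemma exists_good_list (hB : ConnectedTo1 B) {b : Mon n} (hb : b ∈ B) :
    ∃ Lb : List (Fin n), varsSum Lb = b ∧
      redQ B ρ (1 : MvPolynomial (Fin n) K) Lb = monomial b 1 ∧
      SyzQ B ρ (1 : MvPolynomial (Fin n) K) Lb = 0 := by
  obtain ⟨L0, hL0, hpre⟩ := hB.2 b hb
  refine ⟨L0.reverse, by rw [varsSum_reverse, hL0], ?_⟩
  have := red_of_suffixes B ρ hB.1 L0.reverse ?_
  · rw [varsSum_reverse, hL0] at this
    exact this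
  · intro L' hL'
    have h1 : L'.reverse <+: L0 := by
      rw [← List.reverse_suffix, List.reverse_reverse]
      exact hL'
    have := hpre L'.reverse h1
    rwa [varsSum_reverse] at this

theorem stmt13_aux (B : Set (Mon n))
    (ρ : Mon n → MvPolynomial (Fin n) K)
    (hB : ConnectedTo1 B)
    (hρ : ∀ ω ∈ border B, ↑(ρ ω).support ⊆ B)
    (hcomm : ∀ b ∈ spanMon K B, ∀ i j : Fin n,
      piF B (border B) ρ (X i * piF B (border B) ρ (X j * b)) =
      piF B (border B) ρ (X j * piF B (border B) ρ (X i * b))) :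
    ∀ m m' θ θ' : Mon n, θ ∈ border B → θ' ∈ border B → m + θ = m' + θ' →
      ∃ p : Mon n →₀ MvPolynomial (Fin n) K,
        ↑p.support ⊆ border B ∧
        (∀ ω ∈ p.support, (p ω).totalDegree < max (degSum m) (degSum m')) ∧
        Finsupp.single θ ((monomial m (1 : K) : MvPolynomial (Fin n) K)) -
            (Finsupp.single θ' ((monomial m' (1 : K) : MvPolynomial (Fin n) K)) + p) ∈
          Submodule.span (MvPolynomial (Fin n) K) (XiGen B ρ) := by
  intro m m' θ θ' hθ hθ' heq
  have hdecomp : ∀ τ : Mon n, τ ∈ border B →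
      ∃ j : Fin n, ∃ b : Mon n, b ∈ B ∧ Finsupp.single j 1 + b = τ := by
    intro τ hτ
    rcases hτ.1 with h | h
    · exact absurd h hτ.2
    · simp only [Set.mem_iUnion, Set.mem_image] at h
      obtain ⟨j, b, hb, hEq⟩ := h
      exact ⟨j, b, hb, hEq⟩
  obtain ⟨j, b, hbB, hjb⟩ := hdecomp θ hθ
  obtain ⟨j', b', hbB', hjb'⟩ := hdecomp θ' hθ'
  obtain ⟨Lb, hLb, hredb, hsyzb⟩ := exists_good_list B ρ hB hbB
  obtain ⟨Lb', hLb', hredb', hsyzb'⟩ := exists_good_list B ρ hB hbB'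
  obtain ⟨Lm, hLm, hLmlen⟩ := exists_list_varsSum m
  obtain ⟨Lm', hLm', hLmlen'⟩ := exists_list_varsSum m'
  set M : List (Fin n) := Lm ++ j :: Lb with hM
  set M' : List (Fin n) := Lm' ++ j' :: Lb' with hM'
  have h1supp : ↑(1 : MvPolynomial (Fin n) K).support ⊆ B := by
    intro x hx
    simp only [Finset.mem_coe] at hx
    rw [show (1 : MvPolynomial (Fin n) K) = monomial 0 1 by rw [monomial_zero', C_1],
      support_monomial, if_neg one_ne_zero] at hx
    simp only [Finset.mem_singleton] at hx
    rw [hx]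
    exact hB.1
  have hXmul : ∀ (jj : Fin n) (bb : Mon n),
      X jj * (monomial bb (1:K) : MvPolynomial (Fin n) K)
        = monomial (Finsupp.single jj 1 + bb) 1 := by
    intro jj bb
    rw [monomial_single_add, pow_one]
  have hstep : ∀ (jj : Fin n) (bb : Mon n) (τ : Mon n), τ ∈ border B →
      Finsupp.single jj 1 + bb = τ →
      ∀ Lbb : List (Fin n),
        redQ B ρ (1 : MvPolynomial (Fin n) K) Lbb = monomial bb 1 →
        SyzQ B ρ (1 : MvPolynomial (Fin n) K) Lbb = 0 →
        redQ B ρ (1 : MvPolynomial (Fin n) K) (jj :: Lbb) = ρ τ ∧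
        SyzQ B ρ (1 : MvPolynomial (Fin n) K) (jj :: Lbb) = Finsupp.single τ 1 := by
    intro jj bb τ hτ hjjbb Lbb hred hsyz
    constructor
    · rw [redQ_cons, hred, hXmul, hjjbb]
      exact piF_monomial_border B (border B) ρ hτ.2 hτ
    · rw [SyzQ_cons, hsyz, smul_zero, add_zero, hred,
        muF_monomial_border B jj (hjjbb ▸ hτ), hjjbb]
  obtain ⟨hredjb, hsyzjb⟩ := hstep j b θ hθ hjb Lb hredb hsyzb
  obtain ⟨hredjb', hsyzjb'⟩ := hstep j' b' θ' hθ' hjb' Lb' hredb' hsyzb'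
  have hSM : SyzQ B ρ (1 : MvPolynomial (Fin n) K) M
      = SyzQ B ρ (ρ θ) Lm + Finsupp.single θ (monomial m 1) := by
    rw [hM, SyzQ_append, hredjb, hsyzjb, hLm, Finsupp.smul_single, smul_eq_mul, mul_one]
  have hSM' : SyzQ B ρ (1 : MvPolynomial (Fin n) K) M'
      = SyzQ B ρ (ρ θ') Lm' + Finsupp.single θ' (monomial m' 1) := by
    rw [hM', SyzQ_append, hredjb', hsyzjb', hLm', Finsupp.smul_single, smul_eq_mul, mul_one]
  have hperm : List.Perm M M' := by
    apply perm_of_varsSum_eq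
    rw [hM, hM', varsSum_append, varsSum_append, varsSum_cons, varsSum_cons,
      hLm, hLm', hLb, hLb', hjb, hjb', heq]
  obtain ⟨-, hspan⟩ := perm_invariance B ρ hρ hcomm 1 h1supp hperm
  set Rm := SyzQ B ρ (ρ θ) Lm with hRm
  set Rm' := SyzQ B ρ (ρ θ') Lm' with hRm'
  have b1 : ∀ ω : Mon n, Rm ω ≠ 0 → (Rm ω).totalDegree + 1 ≤ degSum m := by
    intro ω h
    have := (SyzQ_bound B ρ (ρ θ) Lm ω h).2
    rwa [hLmlen] at this
  have b2 : ∀ ω : Mon n, Rm' ω ≠ 0 → (Rm' ω).totalDegree + 1 ≤ degSum m' := by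
    intro ω h
    have := (SyzQ_bound B ρ (ρ θ') Lm' ω h).2
    rwa [hLmlen'] at this
  refine ⟨Rm' - Rm, ?_, ?_, ?_⟩
  · intro ω hω
    rw [Finset.mem_coe, Finsupp.mem_support_iff, Finsupp.sub_apply] at hω
    by_cases h2 : Rm' ω = 0
    · have h1 : Rm ω ≠ 0 := by
        intro h1; exact hω (by rw [h1, h2, sub_zero])
      exact (SyzQ_bound B ρ (ρ θ) Lm ω h1).1
    · exact (SyzQ_bound B ρ (ρ θ') Lm' ω h2).1
  · intro ω hω
    rw [Finsupp.mem_support_iff] at hω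
    rw [Finsupp.sub_apply] at hω ⊢
    have key1 : (Rm ω).totalDegree < max (degSum m) (degSum m') := by
      by_cases h1 : Rm ω = 0
      · rw [h1, totalDegree_zero]
        have h2 : Rm' ω ≠ 0 := by
          intro h2; exact hω (by rw [h1, h2, sub_zero])
        have := b2 ω h2
        omega
      · have := b1 ω h1
        omega
    have key2 : (Rm' ω).totalDegree < max (degSum m) (degSum m') := by
      by_cases h2 : Rm' ω = 0
      · rw [h2, totalDegree_zero]
        have h1 : Rm ω ≠ 0 := by
          intro h1; exact hω (by rw [h1, h2, sub_zero])
        have := b1 ω h1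
        omega
      · have := b2 ω h2
        omega
    exact lt_of_le_of_lt (totalDegree_sub _ _) (max_lt key2 key1)
  · have heq2 : Finsupp.single θ ((monomial m (1:K) : MvPolynomial (Fin n) K))
        - (Finsupp.single θ' ((monomial m' (1:K) : MvPolynomial (Fin n) K)) + (Rm' - Rm))
        = SyzQ B ρ (1 : MvPolynomial (Fin n) K) M
          - SyzQ B ρ (1 : MvPolynomial (Fin n) K) M' := by
      rw [hSM, hSM']
      abel
    rw [heq2]
    exact hspan

end Dev

/-- if m·θ = m'·θ' with θ, θ' ∈ ∂B, then m·e_θ ≡ m'·e_{θ'} + Σ p_ω e_ω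
    modulo the module Ξ of commutation syzygies, with deg p_ω < max(|m|,|m'|). -/
theorem stmt13 {n : ℕ} {K : Type} [Field K] (B : Set (Mon n))
    (ρ : Mon n → MvPolynomial (Fin n) K)
    (hB : ConnectedTo1 B)
    (hρ : ∀ ω ∈ border B, ↑(ρ ω).support ⊆ B)
    (hcomm : ∀ b ∈ spanMon K B, ∀ i j : Fin n,
      piF B (border B) ρ (X i * piF B (border B) ρ (X j * b)) =
      piF B (border B) ρ (X j * piF B (border B) ρ (X i * b))) :
    ∀ m m' θ θ' : Mon n, θ ∈ border B → θ' ∈ border B → m + θ = m' + θ' →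
      ∃ p : Mon n →₀ MvPolynomial (Fin n) K,
        ↑p.support ⊆ border B ∧
        (∀ ω ∈ p.support, (p ω).totalDegree < max (degSum m) (degSum m')) ∧
        Finsupp.single θ ((monomial m (1 : K) : MvPolynomial (Fin n) K)) -
            (Finsupp.single θ' ((monomial m' (1 : K) : MvPolynomial (Fin n) K)) + p) ∈
          Submodule.span (MvPolynomial (Fin n) K) (XiGen B ρ) := by
  exact stmt13_aux B ρ hB hρ hcomm
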